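/- Let N ≥ 2 and k ≥ 1 be integers and a, b nonnegative integers with a + b = 2N − 3 − k. Let λ₁, …, λ_N be pairwise distinct complex numbers and R > 0 with R > 3·max_j |λ_j|. Then the double contour integral ∮_{|x₂|=5R} ∮_{|x₁|=R} e(k,1;x₁,x₂)·(x₁−x₂)²·w_a(x₁,x₂)·w_b(x₁,x₂) / ∏_{j=1}^{N} ( (x₁−λ_j)(x₂−λ_j) ) dx₁ dx₂ is independent of the λ_j; and it equals ∮_{|x₂|=5R} ∮_{|x₁|=R} e(k,1;x₁,x₂)·(x₁−x₂)²·w_a(x₁,x₂)·w_b(x₁,x₂) / ( x₁^N·x₂^N ) dx₁ dx₂ (its value when all λ_j = 0). -/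

import Mathlib

/-- `e(k,d;u,v) := ∏_{m=0}^{kd} (m·u + (kd−m)·v)/d`. -/
noncomputable def eFun (k d : ℕ) (u v : ℂ) : ℂ :=
  ∏ m ∈ Finset.range (k * d + 1), (((m : ℂ) * u + ((k * d - m : ℕ) : ℂ) * v) / (d : ℂ))

/-- `w_a(u,v) := Σ_{p+q=a−1, p,q≥0} u^p v^q`. -/
def wPair {R : Type*} [CommRing R] (a : ℕ) (u v : R) : R :=
  ∑ p ∈ Finset.range a, u ^ p * v ^ (a - 1 - p)

open Complex Metric Finset Polynomial

/-! ### Auxiliary machinery -/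

noncomputable def Ffun (D : ℕ) (h : ℕ → ℕ → ℂ) (u v : ℂ) : ℂ :=
  ∑ p ∈ range D, ∑ q ∈ range D, h p q * u ^ p * v ^ q

lemma Ffun_diff_left (D : ℕ) (h : ℕ → ℕ → ℂ) (v : ℂ) :
    Differentiable ℂ (fun u => Ffun D h u v) := by
  unfold Ffun; apply Differentiable.fun_sum; intro p _; apply Differentiable.fun_sum; intro q _; fun_prop

lemma Ffun_diff_right (D : ℕ) (h : ℕ → ℕ → ℂ) (u : ℂ) :
    Differentiable ℂ (fun v => Ffun D h u v) := by
  unfold Ffun; apply Differentiable.fun_sum; intro p _; apply Differentiable.fun_sum; intro q _; fun_prop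

lemma cauchy_mul {f : ℂ → ℂ} (hf : Differentiable ℂ f) {r : ℝ} {w : ℂ} (hw : w ∈ ball (0:ℂ) r) :
    (∮ z in C(0, r), (z - w)⁻¹ * f z) = (2 * Real.pi * I) * f w := by
  simpa [smul_eq_mul] using (hf.differentiableOn).circleIntegral_sub_inv_smul hw

lemma circleIntegral_finsum {ι : Type*} (s : Finset ι) (f : ι → ℂ → ℂ) (c : ℂ) (r : ℝ)
    (hf : ∀ i ∈ s, CircleIntegrable (f i) c r) :
    (∮ z in C(c, r), ∑ i ∈ s, f i z) = ∑ i ∈ s, ∮ z in C(c, r), f i z := by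
  simp only [circleIntegral, smul_sum]
  exact intervalIntegral.integral_finset_sum fun i hi => (hf i hi).out

lemma circle_zero (c : ℂ) (r : ℝ) : (∮ _z in C(c, r), (0:ℂ)) = 0 := by
  simp [circleIntegral]

lemma pf {N : ℕ} (hN : 0 < N) (v : Fin N → ℂ) (hv : Function.Injective v) {x : ℂ}
    (hx : ∀ j, x ≠ v j) :
    (∏ j, (x - v j))⁻¹ = ∑ j, Lagrange.nodalWeight univ v j * (x - v j)⁻¹ := by
  have : Nonempty (Fin N) := ⟨⟨0, hN⟩⟩
  have h := Lagrange.eval_interpolate_not_at_node (s := univ) (v := v) (x := x) 1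
    (fun i _ => hx i)
  rw [Lagrange.interpolate_one hv.injOn univ_nonempty, Polynomial.eval_one,
    Lagrange.eval_nodal] at h
  simp only [Pi.one_apply, mul_one] at h
  exact inv_eq_of_mul_eq_one_right h.symm

/-- generic single-variable step: integral of `g` over a circle with denominator `∏ (z - v j)`. -/
lemma one_var_step {N : ℕ} (hN : 0 < N) (v : Fin N → ℂ) (hv : Function.Injective v)
    {r : ℝ} (hr : 0 < r) (hvr : ∀ j, ‖v j‖ < r)
    (g : ℂ → ℂ) (hg : Differentiable ℂ g) :
    (∮ z in C(0, r), g z * (∏ j, (z - v j))⁻¹) =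
      (2 * Real.pi * I) * ∑ i, Lagrange.nodalWeight univ v i * g (v i) := by
  have hne : ∀ z ∈ sphere (0:ℂ) r, ∀ j, z ≠ v j := by
    intro z hz j hzj
    rw [mem_sphere_zero_iff_norm] at hz
    have := hvr j
    rw [← hzj] at this
    rw [hz] at this
    exact lt_irrefl _ this
  have hcong : Set.EqOn (fun z => g z * (∏ j, (z - v j))⁻¹)
      (fun z => ∑ i, Lagrange.nodalWeight univ v i * ((z - v i)⁻¹ * g z)) (sphere 0 r) := by
    intro z hz
    simp only
    rw [pf hN v hv (hne z hz), Finset.mul_sum]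
    refine Finset.sum_congr rfl fun i _ => by ring
  rw [circleIntegral.integral_congr hr.le hcong]
  have hint : ∀ i ∈ (univ : Finset (Fin N)), CircleIntegrable
      (fun z => Lagrange.nodalWeight univ v i * ((z - v i)⁻¹ * g z)) 0 r := by
    intro i _
    apply ContinuousOn.circleIntegrable hr.le
    apply ContinuousOn.mul continuousOn_const
    apply ContinuousOn.mul
    · exact ((continuousOn_id.sub continuousOn_const).inv₀
        (fun z hz => sub_ne_zero.2 (hne z hz i)))
    · exact hg.continuous.continuousOn
  rw [circleIntegral_finsum _ _ _ _ hint, Finset.mul_sum]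
  refine Finset.sum_congr rfl fun i _ => ?_
  rw [circleIntegral.integral_const_mul, cauchy_mul hg (by
    rw [mem_ball_zero_iff]; exact hvr i)]
  ring

lemma coeff_basis_top {N : ℕ} (v : Fin N → ℂ) (i : Fin N) :
    (Lagrange.basis univ v i).coeff (N - 1) = Lagrange.nodalWeight univ v i := by
  rw [Lagrange.basis_eq_prod_sub_inv_mul_nodal_div (mem_univ i),
    ← Lagrange.nodal_erase_eq_nodal_div (mem_univ i), Polynomial.coeff_C_mul]
  have hmon : (Lagrange.nodal ((univ : Finset (Fin N)).erase i) v).Monic := Lagrange.nodal_monic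
  have hdeg : (Lagrange.nodal ((univ : Finset (Fin N)).erase i) v).natDegree = N - 1 := by
    rw [Lagrange.natDegree_nodal, card_erase_of_mem (mem_univ i), card_univ, Fintype.card_fin]
  rw [← hdeg, hmon.coeff_natDegree, mul_one]

lemma sum_weight_pow {N : ℕ} (hN : 0 < N) (v : Fin N → ℂ) (hv : Function.Injective v)
    {p : ℕ} (hp : p ≤ N - 1) :
    ∑ j, Lagrange.nodalWeight univ v j * v j ^ p = if p = N - 1 then 1 else 0 := by
  have hcard : #(univ : Finset (Fin N)) = N := by simp
  have hdeg : ((X : ℂ[X]) ^ p).degree < #(univ : Finset (Fin N)) := by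
    rw [hcard, degree_X_pow]
    exact_mod_cast Nat.lt_of_le_of_lt hp (Nat.pred_lt hN.ne')
  have h := Lagrange.eq_interpolate (f := (X : ℂ[X]) ^ p) hv.injOn hdeg
  have h2 := congrArg (fun f => Polynomial.coeff f (N - 1)) h
  simp only [Lagrange.interpolate_apply, Polynomial.finset_sum_coeff,
    Polynomial.coeff_C_mul, Polynomial.eval_pow, Polynomial.eval_X,
    Polynomial.coeff_X_pow, coeff_basis_top] at h2
  rw [eq_comm] at h2
  rw [Finset.sum_congr rfl (fun j _ => mul_comm (Lagrange.nodalWeight univ v j) (v j ^ p)), h2]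
  simp [eq_comm]

lemma sum_eval {N : ℕ} (hN : 2 ≤ N) {D : ℕ} (hD : N - 1 < D) (h : ℕ → ℕ → ℂ)
    (hsupp : ∀ p q, 2 * N - 2 < p + q → h p q = 0)
    (mu : Fin N → ℂ) (hmu : Function.Injective mu) :
    (∑ i, ∑ j, Lagrange.nodalWeight univ mu i * Lagrange.nodalWeight univ mu j *
      Ffun D h (mu i) (mu j)) = h (N - 1) (N - 1) := by
  set w := Lagrange.nodalWeight univ mu with hw
  have hN0 : 0 < N := by omega
  have hS : ∀ p : ℕ, p ≤ N - 1 → ∑ i, w i * mu i ^ p = if p = N - 1 then 1 else 0 :=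
    fun p hp => sum_weight_pow hN0 mu hmu hp
  have e0 : ∀ i j, w i * w j * Ffun D h (mu i) (mu j) =
      ∑ p ∈ range D, ∑ q ∈ range D, h p q * ((w i * mu i ^ p) * (w j * mu j ^ q)) := by
    intro i j
    simp only [Ffun, Finset.mul_sum]
    exact sum_congr rfl fun p _ => sum_congr rfl fun q _ => by ring
  calc (∑ i, ∑ j, w i * w j * Ffun D h (mu i) (mu j))
      = ∑ i, ∑ j, ∑ p ∈ range D, ∑ q ∈ range D,
          h p q * ((w i * mu i ^ p) * (w j * mu j ^ q)) :=
        sum_congr rfl fun i _ => sum_congr rfl fun j _ => e0 i j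
    _ = ∑ i, ∑ p ∈ range D, ∑ q ∈ range D, ∑ j,
          h p q * ((w i * mu i ^ p) * (w j * mu j ^ q)) := by
        refine sum_congr rfl fun i _ => ?_
        rw [Finset.sum_comm]
        exact sum_congr rfl fun p _ => Finset.sum_comm
    _ = ∑ p ∈ range D, ∑ q ∈ range D, ∑ i, ∑ j,
          h p q * ((w i * mu i ^ p) * (w j * mu j ^ q)) := by
        rw [Finset.sum_comm]
        exact sum_congr rfl fun p _ => Finset.sum_comm
    _ = ∑ p ∈ range D, ∑ q ∈ range D,
          h p q * ((∑ i, w i * mu i ^ p) * (∑ j, w j * mu j ^ q)) := by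
        refine sum_congr rfl fun p _ => sum_congr rfl fun q _ => ?_
        rw [Finset.sum_mul_sum, Finset.mul_sum]
        exact sum_congr rfl fun i _ => by rw [Finset.mul_sum]
    _ = h (N - 1) (N - 1) := by
        rw [Finset.sum_eq_single_of_mem (N - 1) (mem_range.2 hD)]
        · rw [Finset.sum_eq_single_of_mem (N - 1) (mem_range.2 hD)]
          · rw [hS (N - 1) le_rfl, if_pos rfl, one_mul, mul_one]
          · intro q _ hq
            rcases Nat.lt_or_ge q (N - 1) with hlt | hge
            · rw [hS q hlt.le, if_neg hlt.ne, mul_zero, mul_zero]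
            · rw [hsupp (N - 1) q (by omega), zero_mul]
        · intro p _ hp
          rcases Nat.lt_or_ge p (N - 1) with hlt | hge
          · refine Finset.sum_eq_zero fun q _ => ?_
            rw [hS p hlt.le, if_neg hlt.ne, zero_mul, mul_zero]
          · refine Finset.sum_eq_zero fun q _ => ?_
            rcases Nat.lt_or_ge q (N - 1) with hlt' | hge'
            · rw [hS q hlt'.le, if_neg hlt'.ne, mul_zero, mul_zero]
            · rw [hsupp p q (by omega), zero_mul]

lemma main_mu {N : ℕ} (hN : 2 ≤ N) {D : ℕ} (hD : N - 1 < D) (h : ℕ → ℕ → ℂ)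
    (hsupp : ∀ p q, 2 * N - 2 < p + q → h p q = 0)
    (mu : Fin N → ℂ) (hmu : Function.Injective mu)
    {R : ℝ} (hR : 0 < R) (hmuR : ∀ j, ‖mu j‖ < R) :
    (∮ x₂ in C(0, 5 * R), ∮ x₁ in C(0, R),
      Ffun D h x₁ x₂ / ∏ j, ((x₁ - mu j) * (x₂ - mu j))) =
    (2 * Real.pi * I) ^ 2 * h (N - 1) (N - 1) := by
  have hN0 : 0 < N := by omega
  have h5R : (0:ℝ) < 5 * R := by linarith
  have hmu5 : ∀ j, ‖mu j‖ < 5 * R := fun j => lt_of_lt_of_le (hmuR j) (by linarith)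
  set w := Lagrange.nodalWeight (univ : Finset (Fin N)) mu with hw
  have hinner : ∀ x₂ : ℂ, (∮ x₁ in C(0, R),
      Ffun D h x₁ x₂ / ∏ j, ((x₁ - mu j) * (x₂ - mu j))) =
      (2 * Real.pi * I) * ∑ i, w i * (Ffun D h (mu i) x₂ * (∏ l, (x₂ - mu l))⁻¹) := by
    intro x₂
    have e1 : (fun x₁ => Ffun D h x₁ x₂ / ∏ j, ((x₁ - mu j) * (x₂ - mu j)))
        = fun x₁ => (∏ l, (x₂ - mu l))⁻¹ * (Ffun D h x₁ x₂ * (∏ j, (x₁ - mu j))⁻¹) := by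
      funext z
      rw [Finset.prod_mul_distrib, div_eq_mul_inv, mul_inv]
      ring
    rw [e1, circleIntegral.integral_const_mul,
      one_var_step hN0 mu hmu hR hmuR _ (Ffun_diff_left D h x₂)]
    simp only [Finset.mul_sum]
    exact Finset.sum_congr rfl fun i _ => by ring
  have houter : (∮ x₂ in C(0, 5 * R), ∮ x₁ in C(0, R),
      Ffun D h x₁ x₂ / ∏ j, ((x₁ - mu j) * (x₂ - mu j))) =
      ∮ x₂ in C(0, 5 * R), ∑ i, ((2 * Real.pi * I) * w i) *
        (Ffun D h (mu i) x₂ * (∏ l, (x₂ - mu l))⁻¹) := by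
    refine circleIntegral.integral_congr h5R.le fun x₂ _ => ?_
    rw [hinner x₂, Finset.mul_sum]
    exact Finset.sum_congr rfl fun i _ => by ring
  rw [houter]
  have hnz : ∀ z ∈ sphere (0:ℂ) (5 * R), (∏ l, (z - mu l)) ≠ 0 := by
    intro z hz
    rw [mem_sphere_zero_iff_norm] at hz
    rw [Finset.prod_ne_zero_iff]
    intro l _
    rw [sub_ne_zero]
    intro hzl
    rw [hzl] at hz
    exact absurd (hmu5 l) (by rw [hz]; exact lt_irrefl _)
  have hint : ∀ i ∈ (univ : Finset (Fin N)), CircleIntegrable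
      (fun x₂ => ((2 * Real.pi * I) * w i) *
        (Ffun D h (mu i) x₂ * (∏ l, (x₂ - mu l))⁻¹)) 0 (5 * R) := by
    intro i _
    apply ContinuousOn.circleIntegrable h5R.le
    apply ContinuousOn.mul continuousOn_const
    apply ContinuousOn.mul (Ffun_diff_right D h (mu i)).continuous.continuousOn
    apply ContinuousOn.inv₀ _ hnz
    exact (Continuous.continuousOn (by continuity))
  rw [circleIntegral_finsum _ _ _ _ hint]
  have step : ∀ i : Fin N, (∮ x₂ in C(0, 5 * R), ((2 * Real.pi * I) * w i) *
      (Ffun D h (mu i) x₂ * (∏ l, (x₂ - mu l))⁻¹)) =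
      ((2 * Real.pi * I) * w i) * ((2 * Real.pi * I) *
        ∑ j, w j * Ffun D h (mu i) (mu j)) := by
    intro i
    rw [circleIntegral.integral_const_mul,
      one_var_step hN0 mu hmu h5R hmu5 _ (Ffun_diff_right D h (mu i))]
  calc (∑ i, ∮ x₂ in C(0, 5 * R), ((2 * Real.pi * I) * w i) *
        (Ffun D h (mu i) x₂ * (∏ l, (x₂ - mu l))⁻¹))
      = ∑ i, ((2 * Real.pi * I) * w i) * ((2 * Real.pi * I) *
          ∑ j, w j * Ffun D h (mu i) (mu j)) := Finset.sum_congr rfl fun i _ => step i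
    _ = (2 * Real.pi * I) ^ 2 * ∑ i, ∑ j, w i * w j * Ffun D h (mu i) (mu j) := by
        rw [Finset.mul_sum]
        refine Finset.sum_congr rfl fun i _ => ?_
        rw [Finset.mul_sum, Finset.mul_sum, Finset.mul_sum]
        refine Finset.sum_congr rfl fun j _ => by ring
    _ = (2 * Real.pi * I) ^ 2 * h (N - 1) (N - 1) := by
        rw [sum_eval hN hD h hsupp mu hmu]

lemma zero_step {N D : ℕ} (hN0 : 0 < N) (hD : N - 1 < D) (g : ℕ → ℂ)
    {r : ℝ} (hr : 0 < r) :
    (∮ z in C(0, r), (∑ p ∈ range D, g p * z ^ p) * (z ^ N)⁻¹) =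
      (2 * Real.pi * I) * g (N - 1) := by
  have hne : ∀ z ∈ sphere (0:ℂ) r, z ≠ 0 := fun z hz h0 => by
    rw [mem_sphere_zero_iff_norm, h0, norm_zero] at hz
    exact hr.ne' hz.symm
  have hcong : Set.EqOn (fun z => (∑ p ∈ range D, g p * z ^ p) * (z ^ N)⁻¹)
      (fun z => ∑ p ∈ range D, g p * (z - 0) ^ ((p : ℤ) - (N : ℤ))) (sphere 0 r) := by
    intro z hz
    simp only [sub_zero]
    rw [Finset.sum_mul]
    refine Finset.sum_congr rfl fun p _ => ?_
    rw [zpow_sub₀ (hne z hz), zpow_natCast, zpow_natCast, div_eq_mul_inv, mul_assoc]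
  rw [circleIntegral.integral_congr hr.le hcong]
  have hint : ∀ p ∈ range D, CircleIntegrable
      (fun z => g p * (z - 0) ^ ((p : ℤ) - (N : ℤ))) 0 r := by
    intro p _
    apply ContinuousOn.circleIntegrable hr.le
    apply ContinuousOn.mul continuousOn_const
    apply ContinuousOn.zpow₀ (by fun_prop : ContinuousOn (fun z : ℂ => z - 0) (sphere 0 r))
    intro z hz
    exact Or.inl (by simpa using hne z hz)
  rw [circleIntegral_finsum _ _ _ _ hint]
  rw [Finset.sum_eq_single_of_mem (N - 1) (mem_range.2 hD)]
  · rw [circleIntegral.integral_const_mul]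
    have hexp : ((N - 1 : ℕ) : ℤ) - (N : ℤ) = -1 := by omega
    rw [hexp]
    simp only [zpow_neg_one]
    rw [circleIntegral.integral_sub_inv_of_mem_ball (mem_ball_self hr)]
    ring
  · intro p _ hp
    rw [circleIntegral.integral_const_mul,
      circleIntegral.integral_sub_zpow_of_ne (by omega : ((p:ℤ) - (N:ℤ)) ≠ -1), mul_zero]

lemma main_zero {N : ℕ} (hN : 2 ≤ N) {D : ℕ} (hD : N - 1 < D) (h : ℕ → ℕ → ℂ)
    {R : ℝ} (hR : 0 < R) :
    (∮ x₂ in C(0, 5 * R), ∮ x₁ in C(0, R), Ffun D h x₁ x₂ / (x₁ ^ N * x₂ ^ N)) =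
    (2 * Real.pi * I) ^ 2 * h (N - 1) (N - 1) := by
  have hN0 : 0 < N := by omega
  have h5R : (0:ℝ) < 5 * R := by linarith
  have hinner : ∀ x₂ : ℂ, (∮ x₁ in C(0, R), Ffun D h x₁ x₂ / (x₁ ^ N * x₂ ^ N)) =
      (2 * Real.pi * I) * ((∑ q ∈ range D, h (N - 1) q * x₂ ^ q) * (x₂ ^ N)⁻¹) := by
    intro x₂
    have e1 : (fun x₁ => Ffun D h x₁ x₂ / (x₁ ^ N * x₂ ^ N)) =
        fun x₁ => (x₂ ^ N)⁻¹ *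
          ((∑ p ∈ range D, (∑ q ∈ range D, h p q * x₂ ^ q) * x₁ ^ p) * (x₁ ^ N)⁻¹) := by
      funext z
      rw [div_eq_mul_inv, mul_inv]
      have e2 : Ffun D h z x₂ = ∑ p ∈ range D, (∑ q ∈ range D, h p q * x₂ ^ q) * z ^ p := by
        unfold Ffun
        refine Finset.sum_congr rfl fun p _ => ?_
        rw [Finset.sum_mul]
        exact Finset.sum_congr rfl fun q _ => by ring
      rw [e2]; ring
    rw [e1, circleIntegral.integral_const_mul, zero_step hN0 hD _ hR]
    ring
  calc (∮ x₂ in C(0, 5 * R), ∮ x₁ in C(0, R), Ffun D h x₁ x₂ / (x₁ ^ N * x₂ ^ N))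
      = ∮ x₂ in C(0, 5 * R), (2 * Real.pi * I) *
          ((∑ q ∈ range D, h (N - 1) q * x₂ ^ q) * (x₂ ^ N)⁻¹) :=
        circleIntegral.integral_congr h5R.le fun x₂ _ => hinner x₂
    _ = (2 * Real.pi * I) * ((2 * Real.pi * I) * h (N - 1) (N - 1)) := by
        rw [circleIntegral.integral_const_mul, zero_step hN0 hD _ h5R]
    _ = (2 * Real.pi * I) ^ 2 * h (N - 1) (N - 1) := by ring
noncomputable def HP (k a b : ℕ) : MvPolynomial (Fin 2) ℂ :=
  (∏ m ∈ Finset.range (k + 1),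
    (MvPolynomial.C (m : ℂ) * MvPolynomial.X 0 + MvPolynomial.C ((k - m : ℕ) : ℂ) * MvPolynomial.X 1)) *
  (MvPolynomial.X 0 - MvPolynomial.X 1) ^ 2 *
  (∑ p ∈ Finset.range a, MvPolynomial.X 0 ^ p * MvPolynomial.X 1 ^ (a - 1 - p)) *
  (∑ p ∈ Finset.range b, MvPolynomial.X 0 ^ p * MvPolynomial.X 1 ^ (b - 1 - p))

lemma HP_eval (k a b : ℕ) (u v : ℂ) :
    MvPolynomial.eval ![u, v] (HP k a b) =
      eFun k 1 u v * (u - v) ^ 2 * wPair a u v * wPair b u v := by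
  simp [HP, eFun, wPair, MvPolynomial.eval_prod, map_sum]

lemma HP_deg {k a b N : ℕ} (ha : 0 < a) (hb : 0 < b) (habk : a + b + k + 3 = 2 * N) :
    (HP k a b).totalDegree ≤ 2 * N - 2 := by
  have h1 : (∏ m ∈ Finset.range (k + 1),
      (MvPolynomial.C (m : ℂ) * MvPolynomial.X 0 +
        MvPolynomial.C ((k - m : ℕ) : ℂ) * MvPolynomial.X (1 : Fin 2))).totalDegree ≤ k + 1 := by
    refine (MvPolynomial.totalDegree_finset_prod _ _).trans ?_
    have : ∀ m ∈ Finset.range (k + 1), (MvPolynomial.C (m : ℂ) * MvPolynomial.X 0 +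
        MvPolynomial.C ((k - m : ℕ) : ℂ) * MvPolynomial.X (1 : Fin 2)).totalDegree ≤ 1 := by
      intro m _
      refine (MvPolynomial.totalDegree_add _ _).trans ?_
      apply max_le <;>
      · refine (MvPolynomial.totalDegree_mul _ _).trans ?_
        simp only [MvPolynomial.totalDegree_C, MvPolynomial.totalDegree_X]
        omega
    have h1' := Finset.sum_le_sum this
    simpa using h1'
  have h2 : ((MvPolynomial.X 0 - MvPolynomial.X 1 : MvPolynomial (Fin 2) ℂ) ^ 2).totalDegree
      ≤ 2 := by
    refine (MvPolynomial.totalDegree_pow _ _).trans ?_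
    have : (MvPolynomial.X 0 - MvPolynomial.X 1 : MvPolynomial (Fin 2) ℂ).totalDegree ≤ 1 := by
      refine (MvPolynomial.totalDegree_sub _ _).trans ?_
      simp [MvPolynomial.totalDegree_X]
    omega
  have hsum : ∀ c : ℕ, (∑ p ∈ Finset.range c, MvPolynomial.X 0 ^ p *
      MvPolynomial.X (1 : Fin 2) ^ (c - 1 - p) : MvPolynomial (Fin 2) ℂ).totalDegree ≤ c - 1 := by
    intro c
    refine (MvPolynomial.totalDegree_finset_sum _ _).trans ?_
    refine Finset.sup_le fun p hp => ?_
    refine (MvPolynomial.totalDegree_mul _ _).trans ?_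
    rw [MvPolynomial.totalDegree_X_pow, MvPolynomial.totalDegree_X_pow]
    have := Finset.mem_range.1 hp
    omega
  unfold HP
  refine (MvPolynomial.totalDegree_mul _ _).trans ?_
  have h12 : ((∏ m ∈ Finset.range (k + 1),
      (MvPolynomial.C (m : ℂ) * MvPolynomial.X 0 +
        MvPolynomial.C ((k - m : ℕ) : ℂ) * MvPolynomial.X (1 : Fin 2))) *
      (MvPolynomial.X 0 - MvPolynomial.X 1) ^ 2 *
      (∑ p ∈ Finset.range a, MvPolynomial.X 0 ^ p *
        MvPolynomial.X 1 ^ (a - 1 - p))).totalDegree ≤ (k + 1) + 2 + (a - 1) := by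
    refine (MvPolynomial.totalDegree_mul _ _).trans ?_
    have := (MvPolynomial.totalDegree_mul (∏ m ∈ Finset.range (k + 1),
      (MvPolynomial.C (m : ℂ) * MvPolynomial.X 0 +
        MvPolynomial.C ((k - m : ℕ) : ℂ) * MvPolynomial.X (1 : Fin 2)))
      ((MvPolynomial.X 0 - MvPolynomial.X 1) ^ 2))
    have := hsum a
    omega
  have := hsum b
  omega
lemma degsum (d : Fin 2 →₀ ℕ) : (d.sum fun _ e => e) = d 0 + d 1 := by
  rw [Finsupp.sum_fintype]
  · exact Fin.sum_univ_two d
  · intro _; rfl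

lemma e_of (d : Fin 2 →₀ ℕ) : Finsupp.single 0 (d 0) + Finsupp.single 1 (d 1) = d := by
  ext i
  fin_cases i <;> simp [Finsupp.single_apply]

lemma e_app0 (p q : ℕ) :
    ((Finsupp.single (0 : Fin 2) p + Finsupp.single 1 q : Fin 2 →₀ ℕ)) 0 = p := by
  simp [Finsupp.single_apply]

lemma e_app1 (p q : ℕ) :
    ((Finsupp.single (0 : Fin 2) p + Finsupp.single 1 q : Fin 2 →₀ ℕ)) 1 = q := by
  simp [Finsupp.single_apply]

lemma coeff_zero_of_deg {P : MvPolynomial (Fin 2) ℂ} {p q : ℕ}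
    (h : P.totalDegree < p + q) :
    P.coeff (Finsupp.single 0 p + Finsupp.single 1 q) = 0 := by
  by_contra h0
  have hm : (Finsupp.single (0 : Fin 2) p + Finsupp.single 1 q) ∈ P.support :=
    MvPolynomial.mem_support_iff.2 h0
  have hle := MvPolynomial.le_totalDegree hm
  rw [degsum, e_app0, e_app1] at hle
  omega

lemma evalExpand {P : MvPolynomial (Fin 2) ℂ} {D : ℕ} (hD : P.totalDegree < D) (u v : ℂ) :
    MvPolynomial.eval ![u, v] P =
      Ffun D (fun p q => P.coeff (Finsupp.single 0 p + Finsupp.single 1 q)) u v := by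
  classical
  rw [MvPolynomial.eval_eq', Ffun, ← Finset.sum_product']
  set t' : Finset (ℕ × ℕ) := (range D ×ˢ range D).filter
    (fun pq => (Finsupp.single (0 : Fin 2) pq.1 + Finsupp.single 1 pq.2) ∈ P.support) with ht'
  have hsub : (∑ pq ∈ range D ×ˢ range D,
      P.coeff (Finsupp.single 0 pq.1 + Finsupp.single 1 pq.2) * u ^ pq.1 * v ^ pq.2) =
      ∑ pq ∈ t', P.coeff (Finsupp.single 0 pq.1 + Finsupp.single 1 pq.2) * u ^ pq.1 * v ^ pq.2 := by
    refine (Finset.sum_subset (Finset.filter_subset _ _) ?_).symm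
    intro pq hmem hnot
    rw [Finset.mem_filter, not_and] at hnot
    have h0 : P.coeff (Finsupp.single 0 pq.1 + Finsupp.single 1 pq.2) = 0 := by
      by_contra hc
      exact hnot hmem (MvPolynomial.mem_support_iff.2 hc)
    rw [h0, zero_mul, zero_mul]
  rw [hsub]
  refine Finset.sum_nbij' (fun d => (d 0, d 1))
    (fun pq => Finsupp.single 0 pq.1 + Finsupp.single 1 pq.2) ?_ ?_ ?_ ?_ ?_
  · intro d hd
    rw [ht', Finset.mem_filter]
    have hle := MvPolynomial.le_totalDegree hd
    rw [degsum] at hle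
    refine ⟨Finset.mem_product.2 ⟨Finset.mem_range.2 (by omega), Finset.mem_range.2 (by omega)⟩, ?_⟩
    rw [e_of]
    exact hd
  · intro pq hpq
    exact (Finset.mem_filter.1 hpq).2
  · intro d _
    exact e_of d
  · intro pq _
    rw [e_app0, e_app1]
  · intro d _
    rw [e_of, Fin.prod_univ_two]
    simp [mul_assoc]

/-- Invariance under variation of the characters: for `a + b = 2N − 3 − k`, the double
contour integral is independent of the `λ_j`, and equals its value when all `λ_j = 0`. -/
theorem stmt17 (N k : ℕ) (hN : 2 ≤ N) (hk : 1 ≤ k) (a b : ℕ)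
    (hab : (a : ℤ) + (b : ℤ) = 2 * (N : ℤ) - 3 - (k : ℤ))
    (lam : Fin N → ℂ) (hdist : Function.Injective lam)
    (R : ℝ) (hR : 0 < R) (hR3 : ∀ j, 3 * ‖lam j‖ < R) :
    (∀ mu : Fin N → ℂ, Function.Injective mu → (∀ j, 3 * ‖mu j‖ < R) →
      (∮ x₂ in C(0, 5 * R), ∮ x₁ in C(0, R),
        eFun k 1 x₁ x₂ * (x₁ - x₂) ^ 2 * wPair a x₁ x₂ * wPair b x₁ x₂ /
          ∏ j, ((x₁ - lam j) * (x₂ - lam j))) =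
      (∮ x₂ in C(0, 5 * R), ∮ x₁ in C(0, R),
        eFun k 1 x₁ x₂ * (x₁ - x₂) ^ 2 * wPair a x₁ x₂ * wPair b x₁ x₂ /
          ∏ j, ((x₁ - mu j) * (x₂ - mu j)))) ∧
    (∮ x₂ in C(0, 5 * R), ∮ x₁ in C(0, R),
      eFun k 1 x₁ x₂ * (x₁ - x₂) ^ 2 * wPair a x₁ x₂ * wPair b x₁ x₂ /
        ∏ j, ((x₁ - lam j) * (x₂ - lam j))) =
    (∮ x₂ in C(0, 5 * R), ∮ x₁ in C(0, R),
      eFun k 1 x₁ x₂ * (x₁ - x₂) ^ 2 * wPair a x₁ x₂ * wPair b x₁ x₂ /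
        (x₁ ^ N * x₂ ^ N)) := by
  have habs : ∀ (nu : Fin N → ℂ), (∀ j, 3 * ‖nu j‖ < R) →
      ∀ j, ‖nu j‖ < R := by
    intro nu hnu j
    have h1 := hnu j
    have h2 := norm_nonneg (nu j)
    linarith
  by_cases hab0 : a = 0 ∨ b = 0
  · -- degenerate case: the numerator is identically zero
    have hnum : ∀ u v : ℂ,
        eFun k 1 u v * (u - v) ^ 2 * wPair a u v * wPair b u v = 0 := by
      rcases hab0 with h0 | h0 <;> subst h0 <;> intro u v <;>
        simp [wPair]
    have key : ∀ den : ℂ → ℂ → ℂ, (∮ x₂ in C(0, 5 * R), ∮ x₁ in C(0, R),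
        eFun k 1 x₁ x₂ * (x₁ - x₂) ^ 2 * wPair a x₁ x₂ * wPair b x₁ x₂ /
          den x₁ x₂) = 0 := by
      intro den
      have hin : ∀ x₂ : ℂ, (∮ x₁ in C(0, R),
          eFun k 1 x₁ x₂ * (x₁ - x₂) ^ 2 * wPair a x₁ x₂ * wPair b x₁ x₂ /
            den x₁ x₂) = 0 := by
        intro x₂
        have e : (fun x₁ => eFun k 1 x₁ x₂ * (x₁ - x₂) ^ 2 * wPair a x₁ x₂ * wPair b x₁ x₂ /
            den x₁ x₂) = fun _ => (0:ℂ) := funext fun z => by rw [hnum, zero_div]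
        rw [e, circle_zero]
      have e2 : (fun x₂ => ∮ x₁ in C(0, R),
          eFun k 1 x₁ x₂ * (x₁ - x₂) ^ 2 * wPair a x₁ x₂ * wPair b x₁ x₂ /
            den x₁ x₂) = fun _ => (0:ℂ) := funext fun x₂ => hin x₂
      rw [e2, circle_zero]
    constructor
    · intro mu _ _
      rw [key (fun u v => ∏ j, ((u - lam j) * (v - lam j))),
        key (fun u v => ∏ j, ((u - mu j) * (v - mu j)))]
    · rw [key (fun u v => ∏ j, ((u - lam j) * (v - lam j))),
        key (fun u v => u ^ N * v ^ N)]
  · push_neg at hab0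
    obtain ⟨ha, hb⟩ := hab0
    have habk : a + b + k + 3 = 2 * N := by omega
    set D : ℕ := 2 * N - 1 with hDdef
    set h : ℕ → ℕ → ℂ :=
      fun p q => (HP k a b).coeff (Finsupp.single 0 p + Finsupp.single 1 q) with hhdef
    have hdeg : (HP k a b).totalDegree ≤ 2 * N - 2 :=
      HP_deg (Nat.pos_of_ne_zero ha) (Nat.pos_of_ne_zero hb) habk
    have hdegD : (HP k a b).totalDegree < D := by omega
    have hD : N - 1 < D := by omega
    have hsupp : ∀ p q, 2 * N - 2 < p + q → h p q = 0 := by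
      intro p q hpq
      exact coeff_zero_of_deg (lt_of_le_of_lt hdeg hpq)
    have hfun : ∀ u v : ℂ,
        eFun k 1 u v * (u - v) ^ 2 * wPair a u v * wPair b u v = Ffun D h u v := by
      intro u v
      rw [← HP_eval, evalExpand hdegD]
    have hrw : ∀ den : ℂ → ℂ → ℂ, (∮ x₂ in C(0, 5 * R), ∮ x₁ in C(0, R),
        eFun k 1 x₁ x₂ * (x₁ - x₂) ^ 2 * wPair a x₁ x₂ * wPair b x₁ x₂ / den x₁ x₂) =
        (∮ x₂ in C(0, 5 * R), ∮ x₁ in C(0, R), Ffun D h x₁ x₂ / den x₁ x₂) := by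
      intro den
      exact congrArg (fun f => circleIntegral f 0 (5 * R)) (funext fun x₂ =>
        congrArg (fun g => circleIntegral g 0 R) (funext fun x₁ => by rw [hfun x₁ x₂]))
    constructor
    · intro mu hmu hmuR
      rw [hrw (fun u v => ∏ j, ((u - lam j) * (v - lam j))),
        hrw (fun u v => ∏ j, ((u - mu j) * (v - mu j))),
        main_mu hN hD h hsupp lam hdist hR (habs lam hR3),
        main_mu hN hD h hsupp mu hmu hR (habs mu hmuR)]
    · rw [hrw (fun u v => ∏ j, ((u - lam j) * (v - lam j))),
        hrw (fun u v => u ^ N * v ^ N),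
        main_mu hN hD h hsupp lam hdist hR (habs lam hR3),
        main_zero hN hD h hR]
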